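/- Let r ≥ 2 be an integer. For all φ with 0 < φ < π/(r+1), one has (r+1)·cos(φ)²·sin((r−1)φ) > (r−1)·sin((r+1)φ)·cos(2φ)². -/

import Mathlib

open Real

/-- `sin t / t` is strictly decreasing on `(0, π]`, stated multiplicatively. -/
lemma sin_mul_gt_mul_sin {t₁ t₂ : ℝ} (h0 : 0 < t₁) (h12 : t₁ < t₂) (h2 : t₂ ≤ π) :
    t₂ * Real.sin t₁ > t₁ * Real.sin t₂ := by
  have hpos2 : 0 < t₂ := h0.trans h12
  have hq : t₁ / t₂ < 1 := (div_lt_one hpos2).2 h12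
  have key := strictConcaveOn_sin_Icc.2 (Set.mem_Icc.2 ⟨le_rfl, Real.pi_pos.le⟩)
    (Set.mem_Icc.2 ⟨hpos2.le, h2⟩) hpos2.ne
    (show (0:ℝ) < 1 - t₁/t₂ by linarith)
    (show (0:ℝ) < t₁/t₂ by positivity)
    (by ring)
  simp only [smul_eq_mul, Real.sin_zero, mul_zero, zero_add] at key
  rw [div_mul_cancel₀ _ hpos2.ne'] at key
  rw [div_mul_eq_mul_div, div_lt_iff₀ hpos2] at key
  linarith

/-- for `r ≥ 2` and `0 < φ < π/(r+1)`,
`(r+1)·cos(φ)²·sin((r−1)φ) > (r−1)·sin((r+1)φ)·cos(2φ)²`. -/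
theorem hessian_positivity (r : ℕ) (hr : 2 ≤ r) (φ : ℝ) (hφ0 : 0 < φ)
    (hφ1 : φ < π / (r + 1)) :
    ((r : ℝ) + 1) * Real.cos φ ^ 2 * Real.sin (((r : ℝ) - 1) * φ) >
      ((r : ℝ) - 1) * Real.sin (((r : ℝ) + 1) * φ) * Real.cos (2 * φ) ^ 2 := by
  have hr' : (2 : ℝ) ≤ (r : ℝ) := by exact_mod_cast hr
  have hrp : (0 : ℝ) < (r : ℝ) + 1 := by linarith
  have hφπ : ((r : ℝ) + 1) * φ < π := by
    rw [div_eq_inv_mul] at hφ1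
    calc ((r : ℝ) + 1) * φ < ((r : ℝ) + 1) * (((r:ℝ)+1)⁻¹ * π) := by
          exact (mul_lt_mul_iff_right₀ hrp).2 hφ1
      _ = π := by field_simp
  have hkey : ((r:ℝ)+1) * φ * Real.sin (((r:ℝ)-1) * φ) >
      ((r:ℝ)-1) * φ * Real.sin (((r:ℝ)+1) * φ) := by
    have := sin_mul_gt_mul_sin (t₁ := ((r:ℝ)-1)*φ) (t₂ := ((r:ℝ)+1)*φ)
      (by nlinarith) (by nlinarith) hφπ.le
    nlinarith
  have hA : ((r:ℝ)+1) * Real.sin (((r:ℝ)-1) * φ) >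
      ((r:ℝ)-1) * Real.sin (((r:ℝ)+1) * φ) := by
    have h : (((r:ℝ)-1) * Real.sin (((r:ℝ)+1)*φ)) * φ <
        (((r:ℝ)+1) * Real.sin (((r:ℝ)-1)*φ)) * φ := by linear_combination hkey
    exact (mul_lt_mul_iff_left₀ hφ0).1 h
  have hCpos : 0 < ((r:ℝ)-1) * Real.sin (((r:ℝ)+1) * φ) := by
    have := Real.sin_pos_of_pos_of_lt_pi (x := ((r:ℝ)+1)*φ) (by positivity) hφπ
    nlinarith
  have hφ3 : φ < π / 3 := lt_of_lt_of_le hφ1 (by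
    apply div_le_div_of_nonneg_left Real.pi_pos.le (by norm_num) (by linarith))
  have hsφ : 0 < Real.sin φ :=
    Real.sin_pos_of_pos_of_lt_pi hφ0 (by nlinarith [Real.pi_pos])
  have hs3 : 0 < Real.sin (3*φ) :=
    Real.sin_pos_of_pos_of_lt_pi (by linarith) (by linarith)
  have hcos : Real.cos φ ^ 2 > Real.cos (2*φ) ^ 2 := by
    have e1 : Real.cos φ ^ 2 = (1 + Real.cos (2*φ)) / 2 := by
      rw [Real.cos_sq]; ring_nf
    have e2 : Real.cos (2*φ) ^ 2 = (1 + Real.cos (4*φ)) / 2 := by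
      rw [Real.cos_sq]; ring_nf
    have hd : Real.cos (2*φ) - Real.cos (4*φ) = 2 * Real.sin (3*φ) * Real.sin φ := by
      rw [Real.cos_sub_cos, show (2*φ+4*φ)/2 = 3*φ from by ring,
        show (2*φ-4*φ)/2 = -φ from by ring, Real.sin_neg]
      ring
    nlinarith [mul_pos hs3 hsφ]
  have hcospos : (0:ℝ) < Real.cos φ ^ 2 := by
    have : Real.cos φ > 0 := Real.cos_pos_of_mem_Ioo
      ⟨by linarith [Real.pi_pos], by linarith [Real.pi_gt_three]⟩
    positivity
  calc ((r : ℝ) + 1) * Real.cos φ ^ 2 * Real.sin (((r : ℝ) - 1) * φ)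
      = (((r:ℝ)+1) * Real.sin (((r:ℝ)-1) * φ)) * Real.cos φ ^ 2 := by ring
    _ > (((r:ℝ)-1) * Real.sin (((r:ℝ)+1) * φ)) * Real.cos φ ^ 2 := by
        exact (mul_lt_mul_iff_left₀ hcospos).2 hA
    _ > (((r:ℝ)-1) * Real.sin (((r:ℝ)+1) * φ)) * Real.cos (2*φ) ^ 2 := by
        exact (mul_lt_mul_iff_right₀ hCpos).2 hcos
    _ = ((r : ℝ) - 1) * Real.sin (((r : ℝ) + 1) * φ) * Real.cos (2 * φ) ^ 2 := by ring
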